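/- Let G be a graph and let A, B, C ⊆ V(G) be pairwise disjoint vertex subsets. Then (1) κ^rk_G(A,B) ≤ κ^rk_G(A, B∪C), and (2) κ^rk_G(A, B∪C) ≤ κ^rk_{G−C}(A,B) + κ^rk_{G−B}(A,C), where G−S denotes the induced subgraph of G on V(G)∖S. -/

import Mathlib

open Matrix Module Submodule

/-- Restricting the rows of a matrix does not increase rank. -/
private lemma rank_submatrix_rows_le {F : Type*} [Field F] {m m' n : Type*}
    [Fintype m] [Fintype m'] [Fintype n] (f : m' → m) (M : Matrix m n F) :
    (M.submatrix f id).rank ≤ M.rank := by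
  have h : M.submatrix f id = M.submatrix f ⇑(Equiv.refl n) := rfl
  rw [h, Matrix.rank, Matrix.rank, Matrix.mulVecLin_submatrix, LinearMap.range_comp,
    LinearMap.range_comp,
    show LinearMap.funLeft F F (Equiv.refl n).symm
      = LinearEquiv.funCongrLeft F F (Equiv.refl n).symm from rfl,
    LinearEquiv.range, Submodule.map_top]
  exact Submodule.finrank_map_le _ _

/-- If every column of `M` is a column of `M₁` or of `M₂`,
then `rank M ≤ rank M₁ + rank M₂`. -/
private lemma rank_le_add_of_cols {F : Type*} [Field F] {m p n₁ n₂ : Type*}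
    [Fintype m] [Fintype p] [Fintype n₁] [Fintype n₂]
    (M : Matrix m p F) (M₁ : Matrix m n₁ F) (M₂ : Matrix m n₂ F)
    (h : ∀ j, (∃ b, ∀ i, M i j = M₁ i b) ∨ (∃ b, ∀ i, M i j = M₂ i b)) :
    M.rank ≤ M₁.rank + M₂.rank := by
  have hsub : Set.range Mᵀ ⊆ Set.range M₁ᵀ ∪ Set.range M₂ᵀ := by
    rintro _ ⟨j, rfl⟩
    rcases h j with ⟨b, hb⟩ | ⟨b, hb⟩
    · exact Or.inl ⟨b, by funext i; exact (hb i).symm⟩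
    · exact Or.inr ⟨b, by funext i; exact (hb i).symm⟩
  calc M.rank = finrank F (span F (Set.range Mᵀ)) := by
        rw [Matrix.rank, Matrix.range_mulVecLin]; rfl
    _ ≤ finrank F ↥(span F (Set.range M₁ᵀ) ⊔ span F (Set.range M₂ᵀ)) := by
        apply Submodule.finrank_mono
        rw [← Submodule.span_union]
        exact Submodule.span_mono hsub
    _ ≤ finrank F (span F (Set.range M₁ᵀ)) + finrank F (span F (Set.range M₂ᵀ)) :=
        Submodule.finrank_add_le_finrank_add_finrank _ _
    _ = M₁.rank + M₂.rank := by rw [Matrix.rank, Matrix.rank,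
        Matrix.range_mulVecLin, Matrix.range_mulVecLin]; rfl




/-- The rank over `𝔽₂` of the biadjacency matrix of the (disjoint) vertex sets `A` and `B`
in the graph `G`: the `(a,b)` entry is `1` iff `ab` is an edge of `G`. -/
noncomputable def biadjRank {V : Type} (G : SimpleGraph V) (A B : Finset V) : ℕ :=
  letI : DecidableRel G.Adj := Classical.decRel _
  (Matrix.of fun (a : A) (b : B) => if G.Adj (a : V) (b : V) then (1 : ZMod 2) else 0).rank

/-- The rank-connectivity `κ^rk` of `A` and `B`, computed in the subgraph of `G` induced
on the vertex set `U`: the minimum of `rk(X, U \ X)` over all `X` with `A ⊆ X ⊆ U ∖ B`. -/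
noncomputable def rankConnOn {V : Type} [DecidableEq V]
    (G : SimpleGraph V) (U A B : Finset V) : ℕ :=
  sInf {r : ℕ | ∃ X : Finset V, X ⊆ U ∧ A ⊆ X ∧ Disjoint X B ∧ r = biadjRank G X (U \ X)}

private lemma key {V : Type} [Fintype V] [DecidableEq V] (G : SimpleGraph V)
    (B C X₁ X₂ : Finset V) (hBC : Disjoint B C)
    (hX₁B : Disjoint X₁ B) (hX₂C : Disjoint X₂ C) :
    biadjRank G (X₁ ∩ X₂) (Finset.univ \ (X₁ ∩ X₂)) ≤
      biadjRank G X₁ ((Finset.univ \ C) \ X₁) + biadjRank G X₂ ((Finset.univ \ B) \ X₂) := by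
  letI : DecidableRel G.Adj := Classical.decRel _
  unfold biadjRank
  set X : Finset V := X₁ ∩ X₂ with hX
  let f₁ : ↥X → ↥X₁ := fun a => ⟨a.1, (Finset.mem_inter.mp a.2).1⟩
  let f₂ : ↥X → ↥X₂ := fun a => ⟨a.1, (Finset.mem_inter.mp a.2).2⟩
  refine le_trans
    (rank_le_add_of_cols _
      ((Matrix.of fun (a : X₁) (b : ((Finset.univ \ C) \ X₁ : Finset V)) =>
          if G.Adj (a : V) (b : V) then (1 : ZMod 2) else 0).submatrix f₁ id)
      ((Matrix.of fun (a : X₂) (b : ((Finset.univ \ B) \ X₂ : Finset V)) =>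
          if G.Adj (a : V) (b : V) then (1 : ZMod 2) else 0).submatrix f₂ id) ?_)
    (add_le_add (rank_submatrix_rows_le _ _) (rank_submatrix_rows_le _ _))
  intro j
  have hj : (j : V) ∉ X := by
    have := j.2
    simp only [Finset.mem_sdiff, Finset.mem_univ, true_and] at this
    exact this
  have hj2 : (j : V) ∉ X₁ ∨ (j : V) ∉ X₂ := by
    by_contra h
    push_neg at h
    exact hj (Finset.mem_inter.mpr ⟨h.1, h.2⟩)
  by_cases h1 : (j : V) ∈ X₁
  · have h2 : (j : V) ∉ X₂ := by
      rcases hj2 with h | h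
      · exact absurd h1 h
      · exact h
    have hB : (j : V) ∉ B := Finset.disjoint_left.mp hX₁B h1
    exact Or.inr ⟨⟨j, by simp [Finset.mem_sdiff, hB, h2]⟩, fun i => rfl⟩
  · by_cases hC : (j : V) ∈ C
    · have h2 : (j : V) ∉ X₂ := fun h => Finset.disjoint_left.mp hX₂C h hC
      have hB : (j : V) ∉ B := Finset.disjoint_right.mp hBC hC
      exact Or.inr ⟨⟨j, by simp [Finset.mem_sdiff, hB, h2]⟩, fun i => rfl⟩
    · exact Or.inl ⟨⟨j, by simp [Finset.mem_sdiff, hC, h1]⟩, fun i => rfl⟩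


/-- Monotonicity and subadditivity of the rank-connectivity function:
for pairwise disjoint vertex sets `A`, `B`, `C` of a graph `G`,
(1) `κ^rk_G(A,B) ≤ κ^rk_G(A, B ∪ C)`, and
(2) `κ^rk_G(A, B ∪ C) ≤ κ^rk_{G−C}(A,B) + κ^rk_{G−B}(A,C)`. -/
theorem rankConn_mono_and_subadditive {V : Type} [Fintype V] [DecidableEq V]
    (G : SimpleGraph V) (A B C : Finset V)
    (hAB : Disjoint A B) (hAC : Disjoint A C) (hBC : Disjoint B C) :
    rankConnOn G Finset.univ A B ≤ rankConnOn G Finset.univ A (B ∪ C) ∧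
    rankConnOn G Finset.univ A (B ∪ C) ≤
      rankConnOn G (Finset.univ \ C) A B + rankConnOn G (Finset.univ \ B) A C := by
  have hABC : Disjoint A (B ∪ C) := Finset.disjoint_union_right.mpr ⟨hAB, hAC⟩
  constructor
  · -- (1) monotonicity
    unfold rankConnOn
    have hne : {r : ℕ | ∃ X : Finset V, X ⊆ Finset.univ ∧ A ⊆ X ∧ Disjoint X (B ∪ C) ∧
        r = biadjRank G X (Finset.univ \ X)}.Nonempty :=
      ⟨_, A, Finset.subset_univ A, subset_rfl, hABC, rfl⟩
    obtain ⟨X, hXU, hAX, hXBC, hr⟩ := Nat.sInf_mem hne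
    exact Nat.sInf_le ⟨X, hXU, hAX, (Finset.disjoint_union_right.mp hXBC).1, hr⟩
  · -- (2) subadditivity
    unfold rankConnOn
    have hne₁ : {r : ℕ | ∃ X : Finset V, X ⊆ Finset.univ \ C ∧ A ⊆ X ∧ Disjoint X B ∧
        r = biadjRank G X ((Finset.univ \ C) \ X)}.Nonempty :=
      ⟨_, A, Finset.subset_sdiff.mpr ⟨Finset.subset_univ A, hAC⟩, subset_rfl, hAB, rfl⟩
    have hne₂ : {r : ℕ | ∃ X : Finset V, X ⊆ Finset.univ \ B ∧ A ⊆ X ∧ Disjoint X C ∧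
        r = biadjRank G X ((Finset.univ \ B) \ X)}.Nonempty :=
      ⟨_, A, Finset.subset_sdiff.mpr ⟨Finset.subset_univ A, hAB⟩, subset_rfl, hAC, rfl⟩
    obtain ⟨X₁, hX₁U, hAX₁, hX₁B, h₁⟩ := Nat.sInf_mem hne₁
    obtain ⟨X₂, hX₂U, hAX₂, hX₂C, h₂⟩ := Nat.sInf_mem hne₂
    have hle : sInf {r : ℕ | ∃ X : Finset V, X ⊆ Finset.univ ∧ A ⊆ X ∧ Disjoint X (B ∪ C) ∧
        r = biadjRank G X (Finset.univ \ X)} ≤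
        biadjRank G (X₁ ∩ X₂) (Finset.univ \ (X₁ ∩ X₂)) := by
      refine Nat.sInf_le ⟨X₁ ∩ X₂, Finset.subset_univ _, Finset.subset_inter hAX₁ hAX₂, ?_, rfl⟩
      exact Finset.disjoint_union_right.mpr
        ⟨hX₁B.mono_left Finset.inter_subset_left, hX₂C.mono_left Finset.inter_subset_right⟩
    refine hle.trans ((key G B C X₁ X₂ hBC hX₁B hX₂C).trans ?_)
    rw [← h₁, ← h₂]
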